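/- Let ŷ ∈ ℝⁿ denote the least squares convex regression fit: the projection of Y ∈ ℝⁿ onto the cone K = {θ ∈ ℝⁿ : (θ₂−θ₁)/(x₂−x₁) ≤ ⋯ ≤ (θₙ−θ_{n−1})/(xₙ−x_{n−1})} of convex sequences based on fixed points x₁ < ⋯ < xₙ. Suppose x_k is a kink of ŷ (i.e., the slope increases strictly at x_k). Let x̄_L = k⁻¹Σ_{i=1}^k xᵢ and x̄ = n⁻¹Σ_{i=1}^n xᵢ. Then Σ_{i=1}^k (xᵢ − x̄_L)Yᵢ / Σ_{i=1}^k (xᵢ − x̄_L)² ≤ Σ_{i=1}^n (xᵢ − x̄)Yᵢ / Σ_{i=1}^n (xᵢ − x̄)², i.e., the slope of the least-squares regression line fitted to the first k points is at most the slope of the regression line fitted to all n points, with 2 ≤ k ≤ n. -/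

import Mathlib

lemma tele_aux (u : ℕ → ℝ) : ∀ N : ℕ, ∑ m ∈ Finset.Ioc 0 N, (u (m+1) - u m) = u (N+1) - u 1 := by
  intro N
  induction N with
  | zero => simp
  | succ N ih => rw [Finset.sum_Ioc_succ_top (Nat.zero_le _), ih]; ring

lemma abel_aux (w u : ℕ → ℝ) : ∀ N : ℕ, ∑ i ∈ Finset.Ioc 0 (N+1), w i * u i
    = u 1 * (∑ i ∈ Finset.Ioc 0 (N+1), w i)
      + ∑ m ∈ Finset.Ioc 0 N, (∑ i ∈ Finset.Ioc m (N+1), w i) * (u (m+1) - u m) := by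
  intro N
  induction N with
  | zero =>
      have h1 : Finset.Ioc 0 1 = {1} := by decide
      simp [h1]; ring
  | succ N ih =>
      have hsplit : ∀ m, m ≤ N + 1 → ∑ i ∈ Finset.Ioc m (N+2), w i
          = (∑ i ∈ Finset.Ioc m (N+1), w i) + w (N+2) := by
        intro m hm
        exact Finset.sum_Ioc_succ_top hm w
      rw [Finset.sum_Ioc_succ_top (Nat.zero_le _) (fun i => w i * u i),
          Finset.sum_Ioc_succ_top (Nat.zero_le _) w, ih,
          Finset.sum_Ioc_succ_top (Nat.zero_le _)
            (fun m => (∑ i ∈ Finset.Ioc m (N+2), w i) * (u (m+1) - u m))]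
      have h2 : ∑ m ∈ Finset.Ioc 0 N, (∑ i ∈ Finset.Ioc m (N+2), w i) * (u (m+1) - u m)
          = ∑ m ∈ Finset.Ioc 0 N, ((∑ i ∈ Finset.Ioc m (N+1), w i) * (u (m+1) - u m)
              + w (N+2) * (u (m+1) - u m)) := by
        refine Finset.sum_congr rfl (fun m hm => ?_)
        rw [hsplit m (by simp at hm; omega)]; ring
      rw [h2, Finset.sum_add_distrib, ← Finset.mul_sum, tele_aux]
      have h3 : ∑ i ∈ Finset.Ioc (N+1) (N+2), w i = w (N+2) := by
        rw [Nat.Ioc_succ_singleton, Finset.sum_singleton]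
      rw [h3]
      ring

lemma small_aux (c D ε : ℝ) (hD : 0 ≤ D) (hε : 0 < ε)
    (h : ∀ t : ℝ, 0 < t → t < ε → 2*t*c ≤ t^2*D) : c ≤ 0 := by
  by_contra hc
  push_neg at hc
  set t := min (ε/2) (c/(D+1)) with ht
  have htpos : 0 < t := lt_min (by linarith) (div_pos hc (by linarith))
  have htε : t < ε := lt_of_le_of_lt (min_le_left _ _) (by linarith)
  have h1 := h t htpos htε
  have h2 : t * D ≤ c := by
    calc t * D ≤ (c/(D+1)) * D := by
          apply mul_le_mul_of_nonneg_right (min_le_right _ _) hD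
    _ ≤ c := by
          rw [div_mul_eq_mul_div, div_le_iff₀ (by linarith)]
          nlinarith
  nlinarith

set_option maxHeartbeats 2000000 in
/-- Lemma S5 of the paper: if `x_k` is a kink of the convex least squares fit,
then the slope of the regression line fitted to the first `k` points is at most
the slope of the regression line fitted to all `n` points. -/
theorem stmt7 (n k : ℕ) (hk : 2 ≤ k) (hkn : k < n)
    (x Y yh : ℕ → ℝ)
    (hx : ∀ i, 1 ≤ i → i < n → x i < x (i + 1))
    (hx01 : ∀ i, 1 ≤ i → i ≤ n → x i ∈ Set.Icc (0 : ℝ) 1)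
    (hconv : ∀ i, 2 ≤ i → i < n →
      (yh i - yh (i - 1)) / (x i - x (i - 1)) ≤ (yh (i + 1) - yh i) / (x (i + 1) - x i))
    (hmin : ∀ z : ℕ → ℝ,
      (∀ i, 2 ≤ i → i < n →
        (z i - z (i - 1)) / (x i - x (i - 1)) ≤ (z (i + 1) - z i) / (x (i + 1) - x i)) →
      ∑ i ∈ Finset.Icc 1 n, (Y i - yh i) ^ 2 ≤ ∑ i ∈ Finset.Icc 1 n, (Y i - z i) ^ 2)
    (hkink : (yh k - yh (k - 1)) / (x k - x (k - 1)) < (yh (k + 1) - yh k) / (x (k + 1) - x k)) :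
    let xbarL : ℝ := (∑ i ∈ Finset.Icc 1 k, x i) / k
    let xbar : ℝ := (∑ i ∈ Finset.Icc 1 n, x i) / n
    (∑ i ∈ Finset.Icc 1 k, (x i - xbarL) * Y i) / (∑ i ∈ Finset.Icc 1 k, (x i - xbarL) ^ 2) ≤
      (∑ i ∈ Finset.Icc 1 n, (x i - xbar) * Y i) / (∑ i ∈ Finset.Icc 1 n, (x i - xbar) ^ 2) := by
  have hIcc : ∀ j : ℕ, Finset.Icc 1 j = Finset.Ioc 0 j := fun j => by
    simpa using Finset.Icc_add_one_left_eq_Ioc 0 j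
  simp only [hIcc] at hmin ⊢
  set ck : ℝ := (∑ i ∈ Finset.Ioc 0 k, x i) / k with hck
  set cn : ℝ := (∑ i ∈ Finset.Ioc 0 n, x i) / n with hcn
  -- index basics
  have hn3 : 3 ≤ n := by omega
  -- monotonicity of x
  have hmono : ∀ i j, 1 ≤ i → i ≤ j → j ≤ n → x i ≤ x j := by
    intro i j h1 hij hjn
    induction j, hij using Nat.le_induction with
    | base => exact le_refl _
    | succ j hij ih =>
        exact (ih (by omega)).trans (le_of_lt (hx j (by omega) (by omega)))
  have hlt : ∀ i j, 1 ≤ i → i < j → j ≤ n → x i < x j := by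
    intro i j h1 hij hjn
    have h2 : x i ≤ x (j-1) := hmono i (j-1) h1 (by omega) (by omega)
    have h3 : x (j-1) < x (j-1+1) := hx (j-1) (by omega) (by omega)
    have hj : j - 1 + 1 = j := by omega
    rw [hj] at h3; linarith
  have hΔ : ∀ m, 1 ≤ m → m < n → 0 < x (m+1) - x m :=
    fun m h1 h2 => sub_pos.2 (hx m h1 h2)
  -- slopes
  set s : ℕ → ℝ := fun m => (yh (m+1) - yh m) / (x (m+1) - x m) with hs
  have hsd : ∀ m, 1 ≤ m → m < n → yh (m+1) - yh m = s m * (x (m+1) - x m) := by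
    intro m h1 h2
    have hne : x (m+1) - x m ≠ 0 := ne_of_gt (hΔ m h1 h2)
    rw [hs]
    exact (div_mul_cancel₀ _ hne).symm
  have hconv' : ∀ j, 1 ≤ j → j + 1 < n → s j ≤ s (j+1) := by
    intro j h1 h2
    have h3 := hconv (j+1) (by omega) h2
    simpa using h3
  have smono : ∀ a b, 1 ≤ a → a ≤ b → b < n → s a ≤ s b := by
    intro a b h1 hab hbn
    induction b, hab using Nat.le_induction with
    | base => exact le_refl _
    | succ b hab ih => exact le_trans (ih (by omega)) (hconv' b (by omega) hbn)
  -- comparisons of partial means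
  have Hratio : ∀ m l : ℕ, 1 ≤ m → m ≤ l → l ≤ n →
      (l:ℝ) * ∑ i ∈ Finset.Ioc 0 m, x i ≤ (m:ℝ) * ∑ i ∈ Finset.Ioc 0 l, x i := by
    intro m l h1 hml hln
    have hsplit : (∑ i ∈ Finset.Ioc 0 m, x i) + (∑ i ∈ Finset.Ioc m l, x i)
        = ∑ i ∈ Finset.Ioc 0 l, x i := Finset.sum_Ioc_consecutive x (Nat.zero_le m) hml
    have h2 : ((l:ℝ) - m) * x m ≤ ∑ i ∈ Finset.Ioc m l, x i := by
      have h := Finset.card_nsmul_le_sum (Finset.Ioc m l) x (x m)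
        (fun i hi => by
          simp only [Finset.mem_Ioc] at hi
          exact hmono m i h1 (le_of_lt hi.1) (le_trans hi.2 hln))
      rw [Nat.card_Ioc, nsmul_eq_mul, Nat.cast_sub hml] at h
      exact h
    have h3 : (∑ i ∈ Finset.Ioc 0 m, x i) ≤ (m:ℝ) * x m := by
      have h := Finset.sum_le_card_nsmul (Finset.Ioc 0 m) x (x m)
        (fun i hi => by
          simp only [Finset.mem_Ioc] at hi
          exact hmono i m hi.1 hi.2 (le_trans hml hln))
      rw [Nat.card_Ioc, nsmul_eq_mul, Nat.cast_sub (Nat.zero_le m)] at h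
      simpa using h
    have hm0 : (0:ℝ) ≤ m := Nat.cast_nonneg m
    have hlm0 : (0:ℝ) ≤ (l:ℝ) - m := by
      have := (Nat.cast_le (α := ℝ)).2 hml; linarith
    nlinarith [mul_le_mul_of_nonneg_left h2 hm0, mul_le_mul_of_nonneg_left h3 hlm0]
  have Hstrict : ∀ m l : ℕ, 1 ≤ m → m < l → l ≤ n →
      (l:ℝ) * ∑ i ∈ Finset.Ioc 0 m, x i < (m:ℝ) * ∑ i ∈ Finset.Ioc 0 l, x i := by
    intro m l h1 hml hln
    have hsplit : (∑ i ∈ Finset.Ioc 0 m, x i) + (∑ i ∈ Finset.Ioc m l, x i)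
        = ∑ i ∈ Finset.Ioc 0 l, x i := Finset.sum_Ioc_consecutive x (Nat.zero_le m) (le_of_lt hml)
    have h2 : ((l:ℝ) - m) * x (m+1) ≤ ∑ i ∈ Finset.Ioc m l, x i := by
      have h := Finset.card_nsmul_le_sum (Finset.Ioc m l) x (x (m+1))
        (fun i hi => by
          simp only [Finset.mem_Ioc] at hi
          exact hmono (m+1) i (by omega) hi.1 (le_trans hi.2 hln))
      rw [Nat.card_Ioc, nsmul_eq_mul, Nat.cast_sub (le_of_lt hml)] at h
      exact h
    have h3 : (∑ i ∈ Finset.Ioc 0 m, x i) ≤ (m:ℝ) * x m := by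
      have h := Finset.sum_le_card_nsmul (Finset.Ioc 0 m) x (x m)
        (fun i hi => by
          simp only [Finset.mem_Ioc] at hi
          exact hmono i m hi.1 hi.2 (by omega))
      rw [Nat.card_Ioc, nsmul_eq_mul, Nat.cast_sub (Nat.zero_le m)] at h
      simpa using h
    have hxx : x m < x (m+1) := hx m h1 (by omega)
    have hm0 : (0:ℝ) < m := by exact_mod_cast h1
    have hlm0 : (0:ℝ) < (l:ℝ) - m := by
      have := (Nat.cast_lt (α := ℝ)).2 hml; linarith
    nlinarith [mul_le_mul_of_nonneg_left h2 (le_of_lt hm0),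
      mul_le_mul_of_nonneg_left h3 (le_of_lt hlm0), mul_pos hm0 hlm0]
  -- centred sums vanish
  have hzsum : ∀ N : ℕ, 1 ≤ N →
      ∑ i ∈ Finset.Ioc 0 N, (x i - (∑ i ∈ Finset.Ioc 0 N, x i) / N) = 0 := by
    intro N h1
    rw [Finset.sum_sub_distrib, Finset.sum_const, Nat.card_Ioc, nsmul_eq_mul]
    have hN : (N:ℝ) ≠ 0 := Nat.cast_ne_zero.2 (by omega)
    push_cast
    field_simp
    simp
  have hzk : ∑ i ∈ Finset.Ioc 0 k, (x i - ck) = 0 := by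
    rw [hck]; exact hzsum k (by omega)
  have hzn : ∑ i ∈ Finset.Ioc 0 n, (x i - cn) = 0 := by
    rw [hcn]; exact hzsum n (by omega)
  -- closed form for tail coefficient sums
  have hWgen : ∀ (c : ℝ) (N m : ℕ), m ≤ N → (∑ i ∈ Finset.Ioc 0 N, (x i - c)) = 0 →
      ∑ i ∈ Finset.Ioc m N, (x i - c) = (m:ℝ) * c - ∑ i ∈ Finset.Ioc 0 m, x i := by
    intro c N m hmN hz
    have hsp := Finset.sum_Ioc_consecutive (fun i => x i - c) (Nat.zero_le m) hmN
    have hA : ∑ i ∈ Finset.Ioc 0 m, (x i - c)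
        = (∑ i ∈ Finset.Ioc 0 m, x i) - (m:ℝ) * c := by
      rw [Finset.sum_sub_distrib, Finset.sum_const, Nat.card_Ioc, Nat.sub_zero, nsmul_eq_mul]
    beta_reduce at hsp
    rw [hz, hA] at hsp
    linarith
  have hkpos : (0:ℝ) < k := by exact_mod_cast (by omega : 0 < k)
  have hnpos : (0:ℝ) < n := by exact_mod_cast (by omega : 0 < n)
  -- Abel summation specialized
  have habelL : ∀ u : ℕ → ℝ, ∑ i ∈ Finset.Ioc 0 k, (x i - ck) * u i
      = ∑ m ∈ Finset.Ioc 0 (k-1),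
          ((m:ℝ) * ck - ∑ i ∈ Finset.Ioc 0 m, x i) * (u (m+1) - u m) := by
    intro u
    obtain ⟨K, hK⟩ : ∃ K : ℕ, k = K + 1 := ⟨k-1, by omega⟩
    have h := abel_aux (fun i => x i - ck) u K
    beta_reduce at h
    rw [← hK, hzk, mul_zero, zero_add] at h
    rw [show k - 1 = K from by omega, h]
    refine Finset.sum_congr rfl (fun m hm => ?_)
    simp only [Finset.mem_Ioc] at hm
    rw [hWgen ck k m (by omega) hzk]
  have habelN : ∀ u : ℕ → ℝ, ∑ i ∈ Finset.Ioc 0 n, (x i - cn) * u i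
      = ∑ m ∈ Finset.Ioc 0 (n-1),
          ((m:ℝ) * cn - ∑ i ∈ Finset.Ioc 0 m, x i) * (u (m+1) - u m) := by
    intro u
    obtain ⟨N, hN⟩ : ∃ N : ℕ, n = N + 1 := ⟨n-1, by omega⟩
    have h := abel_aux (fun i => x i - cn) u N
    beta_reduce at h
    rw [← hN, hzn, mul_zero, zero_add] at h
    rw [show n - 1 = N from by omega, h]
    refine Finset.sum_congr rfl (fun m hm => ?_)
    simp only [Finset.mem_Ioc] at hm
    rw [hWgen cn n m (by omega) hzn]
  -- the weight coefficients
  set a : ℕ → ℝ := fun m => ((m:ℝ) * ck - ∑ i ∈ Finset.Ioc 0 m, x i) * (x (m+1) - x m)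
    with hadef
  set b : ℕ → ℝ := fun m => ((m:ℝ) * cn - ∑ i ∈ Finset.Ioc 0 m, x i) * (x (m+1) - x m)
    with hbdef
  have hNLh : ∑ i ∈ Finset.Ioc 0 k, (x i - ck) * yh i
      = ∑ m ∈ Finset.Ioc 0 (k-1), a m * s m := by
    rw [habelL yh]
    refine Finset.sum_congr rfl (fun m hm => ?_)
    simp only [Finset.mem_Ioc] at hm
    rw [hsd m (by omega) (by omega)]
    simp only [hadef]; ring
  have hNNh : ∑ i ∈ Finset.Ioc 0 n, (x i - cn) * yh i
      = ∑ m ∈ Finset.Ioc 0 (n-1), b m * s m := by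
    rw [habelN yh]
    refine Finset.sum_congr rfl (fun m hm => ?_)
    simp only [Finset.mem_Ioc] at hm
    rw [hsd m (by omega) (by omega)]
    simp only [hbdef]; ring
  have hSLa : ∑ i ∈ Finset.Ioc 0 k, (x i - ck)^2 = ∑ m ∈ Finset.Ioc 0 (k-1), a m := by
    have e1 : ∑ i ∈ Finset.Ioc 0 k, (x i - ck)^2
        = ∑ i ∈ Finset.Ioc 0 k, ((x i - ck) * x i - ck * (x i - ck)) :=
      Finset.sum_congr rfl (fun i _ => by ring)
    rw [e1, Finset.sum_sub_distrib, ← Finset.mul_sum, hzk, mul_zero, sub_zero, habelL x]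
  have hSNb : ∑ i ∈ Finset.Ioc 0 n, (x i - cn)^2 = ∑ m ∈ Finset.Ioc 0 (n-1), b m := by
    have e1 : ∑ i ∈ Finset.Ioc 0 n, (x i - cn)^2
        = ∑ i ∈ Finset.Ioc 0 n, ((x i - cn) * x i - cn * (x i - cn)) :=
      Finset.sum_congr rfl (fun i _ => by ring)
    rw [e1, Finset.sum_sub_distrib, ← Finset.mul_sum, hzn, mul_zero, sub_zero, habelN x]
  -- positivity of the weights
  have hapos : ∀ m ∈ Finset.Ioc 0 (k-1), 0 < a m := by
    intro m hm
    simp only [Finset.mem_Ioc] at hm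
    have h1 := Hstrict m k (by omega) (by omega) (by omega)
    have hΔm : 0 < x (m+1) - x m := hΔ m (by omega) (by omega)
    have h2 : 0 < (m:ℝ) * ck - ∑ i ∈ Finset.Ioc 0 m, x i := by
      rw [hck, sub_pos, ← mul_div_assoc, lt_div_iff₀ hkpos]
      linarith
    simp only [hadef]
    exact mul_pos h2 hΔm
  have hbpos : ∀ m ∈ Finset.Ioc 0 (n-1), 0 < b m := by
    intro m hm
    simp only [Finset.mem_Ioc] at hm
    have h1 := Hstrict m n (by omega) (by omega) (by omega)
    have hΔm : 0 < x (m+1) - x m := hΔ m (by omega) (by omega)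
    have h2 : 0 < (m:ℝ) * cn - ∑ i ∈ Finset.Ioc 0 m, x i := by
      rw [hcn, sub_pos, ← mul_div_assoc, lt_div_iff₀ hnpos]
      linarith
    simp only [hbdef]
    exact mul_pos h2 hΔm
  -- the cross ratio inequality
  have hab : ∀ m l : ℕ, m ∈ Finset.Ioc 0 (k-1) → l ∈ Finset.Ioc 0 (k-1) → m ≤ l →
      a l * b m ≤ a m * b l := by
    intro m l hm hl hml
    simp only [Finset.mem_Ioc] at hm hl
    have hdk : ck ≤ cn := by
      rw [hck, hcn, div_le_div_iff₀ hkpos hnpos]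
      have := Hratio k n (by omega) (le_of_lt hkn) (le_refl n)
      linarith
    have hr := Hratio m l (by omega) hml (by omega)
    have hΔm : 0 < x (m+1) - x m := hΔ m (by omega) (by omega)
    have hΔl : 0 < x (l+1) - x l := hΔ l (by omega) (by omega)
    have hid : a m * b l - a l * b m
        = ((x (m+1) - x m) * (x (l+1) - x l)) * ((cn - ck) *
            ((m:ℝ) * (∑ i ∈ Finset.Ioc 0 l, x i) - (l:ℝ) * (∑ i ∈ Finset.Ioc 0 m, x i))) := by
      simp only [hadef, hbdef]; ring
    have hnn : 0 ≤ ((x (m+1) - x m) * (x (l+1) - x l)) * ((cn - ck) *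
            ((m:ℝ) * (∑ i ∈ Finset.Ioc 0 l, x i) - (l:ℝ) * (∑ i ∈ Finset.Ioc 0 m, x i))) :=
      mul_nonneg (mul_nonneg hΔm.le hΔl.le)
        (mul_nonneg (by linarith) (by linarith))
    linarith
  -- Chebyshev-type comparison of the two weighted averages of slopes
  have cheb : (∑ m ∈ Finset.Ioc 0 (k-1), a m * s m) * (∑ l ∈ Finset.Ioc 0 (n-1), b l)
      ≤ (∑ l ∈ Finset.Ioc 0 (n-1), b l * s l) * (∑ m ∈ Finset.Ioc 0 (k-1), a m) := by
    have e2 : (∑ m ∈ Finset.Ioc 0 (k-1), a m * s m) * (∑ l ∈ Finset.Ioc 0 (n-1), b l)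
        = ∑ l ∈ Finset.Ioc 0 (n-1), ∑ m ∈ Finset.Ioc 0 (k-1), (a m * s m) * b l := by
      rw [Finset.sum_mul_sum]
      exact Finset.sum_comm
    have hRL : (∑ l ∈ Finset.Ioc 0 (n-1), b l * s l) * (∑ m ∈ Finset.Ioc 0 (k-1), a m)
        - (∑ m ∈ Finset.Ioc 0 (k-1), a m * s m) * (∑ l ∈ Finset.Ioc 0 (n-1), b l)
        = ∑ l ∈ Finset.Ioc 0 (n-1), ∑ m ∈ Finset.Ioc 0 (k-1), a m * b l * (s l - s m) := by
      rw [Finset.sum_mul_sum, e2, ← Finset.sum_sub_distrib]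
      refine Finset.sum_congr rfl fun l _ => ?_
      rw [← Finset.sum_sub_distrib]
      exact Finset.sum_congr rfl fun m _ => by ring
    have hsplit := Finset.sum_Ioc_consecutive
      (fun l => ∑ m ∈ Finset.Ioc 0 (k-1), a m * b l * (s l - s m))
      (Nat.zero_le (k-1)) (by omega : k-1 ≤ n-1)
    beta_reduce at hsplit
    have hpart2 : 0 ≤ ∑ l ∈ Finset.Ioc (k-1) (n-1),
        ∑ m ∈ Finset.Ioc 0 (k-1), a m * b l * (s l - s m) := by
      refine Finset.sum_nonneg fun l hl => Finset.sum_nonneg fun m hm => ?_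
      have hm' := hm
      simp only [Finset.mem_Ioc] at hl hm'
      have h1 : 0 < a m := hapos m hm
      have h2 : 0 < b l := hbpos l (Finset.mem_Ioc.2 ⟨by omega, by omega⟩)
      have h3 : s m ≤ s l := smono m l (by omega) (by omega) (by omega)
      exact mul_nonneg (mul_nonneg h1.le h2.le) (by linarith)
    have hpart1 : 0 ≤ ∑ l ∈ Finset.Ioc 0 (k-1),
        ∑ m ∈ Finset.Ioc 0 (k-1), a m * b l * (s l - s m) := by
      have hswap : ∑ l ∈ Finset.Ioc 0 (k-1), ∑ m ∈ Finset.Ioc 0 (k-1), a m * b l * (s l - s m)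
          = ∑ l ∈ Finset.Ioc 0 (k-1), ∑ m ∈ Finset.Ioc 0 (k-1), a l * b m * (s m - s l) :=
        Finset.sum_comm
      have hdup : (∑ l ∈ Finset.Ioc 0 (k-1), ∑ m ∈ Finset.Ioc 0 (k-1),
            a m * b l * (s l - s m)) * 2
          = ∑ l ∈ Finset.Ioc 0 (k-1), ∑ m ∈ Finset.Ioc 0 (k-1),
              (a m * b l - a l * b m) * (s l - s m) := by
        rw [mul_two]
        nth_rewrite 2 [hswap]
        rw [← Finset.sum_add_distrib]
        refine Finset.sum_congr rfl fun l _ => ?_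
        rw [← Finset.sum_add_distrib]
        exact Finset.sum_congr rfl fun m _ => by ring
      have h3 : 0 ≤ ∑ l ∈ Finset.Ioc 0 (k-1), ∑ m ∈ Finset.Ioc 0 (k-1),
          (a m * b l - a l * b m) * (s l - s m) := by
        refine Finset.sum_nonneg fun l hl => Finset.sum_nonneg fun m hm => ?_
        have hl' := hl; have hm' := hm
        simp only [Finset.mem_Ioc] at hl' hm'
        rcases le_total m l with h | h
        · have h4 := hab m l hm hl h
          have h5 : s m ≤ s l := smono m l (by omega) h (by omega)
          exact mul_nonneg (by linarith) (by linarith)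
        · have h4 := hab l m hl hm h
          have h5 : s l ≤ s m := smono l m (by omega) h (by omega)
          exact mul_nonneg_iff.2 (Or.inr ⟨by linarith, by linarith⟩)
      linarith
    linarith
  -- variational principle: admissible directions have nonpositive inner product
  have dir : ∀ (d : ℕ → ℝ) (ε : ℝ), 0 < ε →
      (∀ t : ℝ, 0 < t → t < ε → ∀ i, 2 ≤ i → i < n →
        ((yh i + t * d i) - (yh (i-1) + t * d (i-1))) / (x i - x (i-1))
          ≤ ((yh (i+1) + t * d (i+1)) - (yh i + t * d i)) / (x (i+1) - x i)) →
      ∑ i ∈ Finset.Ioc 0 n, (Y i - yh i) * d i ≤ 0 := by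
    intro d ε hε hcv
    refine small_aux _ (∑ i ∈ Finset.Ioc 0 n, (d i)^2) ε
      (Finset.sum_nonneg fun i _ => sq_nonneg _) hε ?_
    intro t ht htε
    have h1 := hmin (fun i => yh i + t * d i) (hcv t ht htε)
    beta_reduce at h1
    have h2 : ∑ i ∈ Finset.Ioc 0 n, (Y i - (yh i + t * d i))^2
        = ∑ i ∈ Finset.Ioc 0 n,
            ((Y i - yh i)^2 - 2*t*((Y i - yh i) * d i) + t^2 * (d i)^2) :=
      Finset.sum_congr rfl (fun i _ => by ring)
    rw [h2, Finset.sum_add_distrib, Finset.sum_sub_distrib,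
      ← Finset.mul_sum, ← Finset.mul_sum] at h1
    linarith
  -- a slope comparison helper
  have key : ∀ (j : ℕ) (p q P Q : ℝ), 1 ≤ j → j + 1 < n → s j + p ≤ s (j+1) + q →
      P = (yh (j+1) - yh j) + p * (x (j+1) - x j) →
      Q = (yh (j+1+1) - yh (j+1)) + q * (x (j+1+1) - x (j+1)) →
      P / (x (j+1) - x j) ≤ Q / (x (j+1+1) - x (j+1)) := by
    intro j p q P Q h1 h2 hineq hP hQ
    have d1 := hΔ j h1 (by omega)
    have d2 := hΔ (j+1) (by omega) h2
    have e1 : P = (s j + p) * (x (j+1) - x j) := by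
      rw [hP, hsd j h1 (by omega)]; ring
    have e2 : Q = (s (j+1) + q) * (x (j+1+1) - x (j+1)) := by
      rw [hQ, hsd (j+1) (by omega) h2]; ring
    rw [e1, e2, mul_div_assoc, mul_div_assoc, div_self (ne_of_gt d1),
      div_self (ne_of_gt d2), mul_one, mul_one]
    exact hineq
  -- the kink gap
  have hk1 : k - 1 + 1 = k := by omega
  have hsk1 : s (k-1) = (yh k - yh (k-1)) / (x k - x (k-1)) := by
    simp only [hs]; rw [hk1]
  have hskk : s k = (yh (k+1) - yh k) / (x (k+1) - x k) := by simp only [hs]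
  set eps : ℝ := s k - s (k-1) with hepsdef
  have heps : 0 < eps := by rw [hepsdef, hsk1, hskk]; linarith [hkink]
  -- direction: constant
  have P1a : ∑ i ∈ Finset.Ioc 0 n, (Y i - yh i) * (1:ℝ) ≤ 0 := by
    refine dir (fun _ => (1:ℝ)) 1 one_pos ?_
    intro t ht htε i h2i hin
    beta_reduce
    obtain ⟨j, rfl⟩ : ∃ j, i = j + 1 := ⟨i-1, by omega⟩
    simp only [Nat.add_sub_cancel]
    exact key j 0 0 _ _ (by omega) (by omega)
      (by simpa using hconv' j (by omega) (by omega)) (by ring) (by ring)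
  have P1b : ∑ i ∈ Finset.Ioc 0 n, (Y i - yh i) * (-1:ℝ) ≤ 0 := by
    refine dir (fun _ => (-1:ℝ)) 1 one_pos ?_
    intro t ht htε i h2i hin
    beta_reduce
    obtain ⟨j, rfl⟩ : ∃ j, i = j + 1 := ⟨i-1, by omega⟩
    simp only [Nat.add_sub_cancel]
    exact key j 0 0 _ _ (by omega) (by omega)
      (by simpa using hconv' j (by omega) (by omega)) (by ring) (by ring)
  have hP1 : ∑ i ∈ Finset.Ioc 0 n, (Y i - yh i) = 0 := by
    have hA := P1a; have hB := P1b
    simp only [mul_one] at hA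
    simp only [mul_neg_one, Finset.sum_neg_distrib] at hB
    linarith
  -- direction: linear
  have P2a : ∑ i ∈ Finset.Ioc 0 n, (Y i - yh i) * x i ≤ 0 := by
    refine dir (fun i => x i) 1 one_pos ?_
    intro t ht htε i h2i hin
    beta_reduce
    obtain ⟨j, rfl⟩ : ∃ j, i = j + 1 := ⟨i-1, by omega⟩
    simp only [Nat.add_sub_cancel]
    exact key j t t _ _ (by omega) (by omega)
      (by linarith [hconv' j (by omega) (by omega)]) (by ring) (by ring)
  have P2b : ∑ i ∈ Finset.Ioc 0 n, (Y i - yh i) * (-(x i)) ≤ 0 := by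
    refine dir (fun i => -(x i)) 1 one_pos ?_
    intro t ht htε i h2i hin
    beta_reduce
    obtain ⟨j, rfl⟩ : ∃ j, i = j + 1 := ⟨i-1, by omega⟩
    simp only [Nat.add_sub_cancel]
    exact key j (-t) (-t) _ _ (by omega) (by omega)
      (by linarith [hconv' j (by omega) (by omega)]) (by ring) (by ring)
  have hP2 : ∑ i ∈ Finset.Ioc 0 n, (Y i - yh i) * x i = 0 := by
    have hB := P2b
    simp only [mul_neg, Finset.sum_neg_distrib] at hB
    linarith [P2a]
  -- direction: left wedge at k
  have he0 : ∀ m : ℕ, k ≤ m → (if m ≤ k then x m - x k else 0) = (0:ℝ) := by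
    intro m hm
    by_cases h : m ≤ k
    · rw [if_pos h, show m = k from by omega]; ring
    · rw [if_neg h]
  have Pe1 : ∑ i ∈ Finset.Ioc 0 n, (Y i - yh i) * (if i ≤ k then x i - x k else 0) ≤ 0 := by
    refine dir (fun i => if i ≤ k then x i - x k else 0) eps heps ?_
    intro t ht htε i h2i hin
    beta_reduce
    obtain ⟨j, rfl⟩ : ∃ j, i = j + 1 := ⟨i-1, by omega⟩
    simp only [Nat.add_sub_cancel]
    rcases lt_trichotomy (j+1) k with hcase | hcase | hcase
    · refine key j t t _ _ (by omega) (by omega)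
        (by linarith [hconv' j (by omega) (by omega)]) ?_ ?_
      · rw [if_pos (show j+1 ≤ k by omega), if_pos (show j ≤ k by omega)]; ring
      · rw [if_pos (show j+1+1 ≤ k by omega), if_pos (show j+1 ≤ k by omega)]; ring
    · refine key j t 0 _ _ (by omega) (by omega) ?_ ?_ ?_
      · have hj : j = k - 1 := by omega
        rw [hj, hk1]
        linarith [htε, hepsdef]
      · rw [if_pos (show j+1 ≤ k by omega), if_pos (show j ≤ k by omega)]; ring
      · rw [if_neg (show ¬ (j+1+1 ≤ k) by omega), if_pos (show j+1 ≤ k by omega), hcase]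
        ring
    · refine key j 0 0 _ _ (by omega) (by omega)
        (by simpa using hconv' j (by omega) (by omega)) ?_ ?_
      · rw [he0 j (by omega), he0 (j+1) (by omega)]; ring
      · rw [he0 (j+1) (by omega), he0 (j+1+1) (by omega)]; ring
  have Pe2 : ∑ i ∈ Finset.Ioc 0 n,
      (Y i - yh i) * (-(if i ≤ k then x i - x k else 0)) ≤ 0 := by
    refine dir (fun i => -(if i ≤ k then x i - x k else 0)) 1 one_pos ?_
    intro t ht htε i h2i hin
    beta_reduce
    obtain ⟨j, rfl⟩ : ∃ j, i = j + 1 := ⟨i-1, by omega⟩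
    simp only [Nat.add_sub_cancel]
    rcases lt_trichotomy (j+1) k with hcase | hcase | hcase
    · refine key j (-t) (-t) _ _ (by omega) (by omega)
        (by linarith [hconv' j (by omega) (by omega)]) ?_ ?_
      · rw [if_pos (show j+1 ≤ k by omega), if_pos (show j ≤ k by omega)]; ring
      · rw [if_pos (show j+1+1 ≤ k by omega), if_pos (show j+1 ≤ k by omega)]; ring
    · refine key j (-t) 0 _ _ (by omega) (by omega) ?_ ?_ ?_
      · linarith [hconv' j (by omega) (by omega)]
      · rw [if_pos (show j+1 ≤ k by omega), if_pos (show j ≤ k by omega)]; ring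
      · rw [if_neg (show ¬ (j+1+1 ≤ k) by omega), if_pos (show j+1 ≤ k by omega), hcase]
        ring
    · refine key j 0 0 _ _ (by omega) (by omega)
        (by simpa using hconv' j (by omega) (by omega)) ?_ ?_
      · rw [he0 j (by omega), he0 (j+1) (by omega)]; ring
      · rw [he0 (j+1) (by omega), he0 (j+1+1) (by omega)]; ring
  have hPe : ∑ i ∈ Finset.Ioc 0 n, (Y i - yh i) * (if i ≤ k then x i - x k else 0) = 0 := by
    have hB := Pe2
    simp only [mul_neg, Finset.sum_neg_distrib] at hB
    linarith [Pe1]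
  -- direction: left hinge at k+1
  have hh0 : ∀ m : ℕ, k+1 ≤ m → (if m ≤ k+1 then x (k+1) - x m else 0) = (0:ℝ) := by
    intro m hm
    by_cases h : m ≤ k+1
    · rw [if_pos h, show m = k+1 from by omega]; ring
    · rw [if_neg h]
  have hPh : ∑ i ∈ Finset.Ioc 0 n,
      (Y i - yh i) * (if i ≤ k+1 then x (k+1) - x i else 0) ≤ 0 := by
    refine dir (fun i => if i ≤ k+1 then x (k+1) - x i else 0) 1 one_pos ?_
    intro t ht htε i h2i hin
    beta_reduce
    obtain ⟨j, rfl⟩ : ∃ j, i = j + 1 := ⟨i-1, by omega⟩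
    simp only [Nat.add_sub_cancel]
    rcases lt_trichotomy (j+1) (k+1) with hcase | hcase | hcase
    · refine key j (-t) (-t) _ _ (by omega) (by omega)
        (by linarith [hconv' j (by omega) (by omega)]) ?_ ?_
      · rw [if_pos (show j+1 ≤ k+1 by omega), if_pos (show j ≤ k+1 by omega)]; ring
      · rw [if_pos (show j+1+1 ≤ k+1 by omega), if_pos (show j+1 ≤ k+1 by omega)]; ring
    · refine key j (-t) 0 _ _ (by omega) (by omega) ?_ ?_ ?_
      · linarith [hconv' j (by omega) (by omega)]
      · rw [if_pos (show j+1 ≤ k+1 by omega), if_pos (show j ≤ k+1 by omega)]; ring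
      · rw [if_neg (show ¬ (j+1+1 ≤ k+1) by omega), if_pos (show j+1 ≤ k+1 by omega), hcase]
        ring
    · refine key j 0 0 _ _ (by omega) (by omega)
        (by simpa using hconv' j (by omega) (by omega)) ?_ ?_
      · rw [hh0 j (by omega), hh0 (j+1) (by omega)]; ring
      · rw [hh0 (j+1) (by omega), hh0 (j+1+1) (by omega)]; ring
  -- restrict the wedge/hinge identities to initial segments
  have hEsplit : ∑ i ∈ Finset.Ioc 0 n, (Y i - yh i) * (if i ≤ k then x i - x k else 0)
      = ∑ i ∈ Finset.Ioc 0 k, (Y i - yh i) * (x i - x k) := by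
    rw [← Finset.sum_Ioc_consecutive
      (fun i => (Y i - yh i) * (if i ≤ k then x i - x k else 0))
      (Nat.zero_le k) (le_of_lt hkn)]
    beta_reduce
    have hz2 : ∑ i ∈ Finset.Ioc k n, (Y i - yh i) * (if i ≤ k then x i - x k else 0) = 0 := by
      refine Finset.sum_eq_zero fun i hi => ?_
      simp only [Finset.mem_Ioc] at hi
      rw [if_neg (by omega)]; ring
    rw [hz2, add_zero]
    refine Finset.sum_congr rfl fun i hi => ?_
    simp only [Finset.mem_Ioc] at hi
    rw [if_pos hi.2]
  have hE : ∑ i ∈ Finset.Ioc 0 k, (Y i - yh i) * (x i - x k) = 0 := by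
    rw [← hEsplit]; exact hPe
  have hHsplit : ∑ i ∈ Finset.Ioc 0 n, (Y i - yh i) * (if i ≤ k+1 then x (k+1) - x i else 0)
      = ∑ i ∈ Finset.Ioc 0 (k+1), (Y i - yh i) * (x (k+1) - x i) := by
    rw [← Finset.sum_Ioc_consecutive
      (fun i => (Y i - yh i) * (if i ≤ k+1 then x (k+1) - x i else 0))
      (Nat.zero_le (k+1)) (by omega : k+1 ≤ n)]
    beta_reduce
    have hz2 : ∑ i ∈ Finset.Ioc (k+1) n,
        (Y i - yh i) * (if i ≤ k+1 then x (k+1) - x i else 0) = 0 := by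
      refine Finset.sum_eq_zero fun i hi => ?_
      simp only [Finset.mem_Ioc] at hi
      rw [if_neg (by omega)]; ring
    rw [hz2, add_zero]
    refine Finset.sum_congr rfl fun i hi => ?_
    simp only [Finset.mem_Ioc] at hi
    rw [if_pos hi.2]
  have hstep : ∑ i ∈ Finset.Ioc 0 (k+1), (Y i - yh i) * (x (k+1) - x i)
      = ∑ i ∈ Finset.Ioc 0 k, (Y i - yh i) * (x (k+1) - x i) := by
    rw [Finset.sum_Ioc_succ_top (Nat.zero_le k)]
    rw [sub_self, mul_zero, add_zero]
  have hTineq : (x (k+1) - x k) * (∑ i ∈ Finset.Ioc 0 k, (Y i - yh i)) ≤ 0 := by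
    have hcomb : ∑ i ∈ Finset.Ioc 0 k, (Y i - yh i) * (x (k+1) - x i)
        = (x (k+1) - x k) * (∑ i ∈ Finset.Ioc 0 k, (Y i - yh i))
          - ∑ i ∈ Finset.Ioc 0 k, (Y i - yh i) * (x i - x k) := by
      rw [Finset.mul_sum, ← Finset.sum_sub_distrib]
      exact Finset.sum_congr rfl fun i _ => by ring
    have h := hPh
    rw [hHsplit, hstep, hcomb, hE, sub_zero] at h
    exact h
  have hT : (∑ i ∈ Finset.Ioc 0 k, (Y i - yh i)) ≤ 0 := by
    have hΔk := hΔ k (by omega) (by omega)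
    by_contra hcon; push_neg at hcon
    linarith [mul_pos hΔk hcon]
  have hxk : ck < x k := by
    have h2 : ∑ i ∈ Finset.Ioc 0 k, x i < ∑ _i ∈ Finset.Ioc 0 k, x k := by
      refine Finset.sum_lt_sum (fun i hi => ?_) ⟨1, ?_, ?_⟩
      · simp only [Finset.mem_Ioc] at hi
        exact hmono i k hi.1 hi.2 (by omega)
      · exact Finset.mem_Ioc.2 ⟨by omega, by omega⟩
      · exact hlt 1 k (le_refl 1) (by omega) (by omega)
    rw [Finset.sum_const, Nat.card_Ioc, Nat.sub_zero, nsmul_eq_mul] at h2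
    rw [hck, div_lt_iff₀ hkpos]
    linarith
  -- numerator comparisons
  have hNL : ∑ i ∈ Finset.Ioc 0 k, (x i - ck) * Y i
      ≤ ∑ i ∈ Finset.Ioc 0 k, (x i - ck) * yh i := by
    have hdiff : ∑ i ∈ Finset.Ioc 0 k, (x i - ck) * Y i
          - ∑ i ∈ Finset.Ioc 0 k, (x i - ck) * yh i
        = (∑ i ∈ Finset.Ioc 0 k, (Y i - yh i) * (x i - x k))
          + (x k - ck) * (∑ i ∈ Finset.Ioc 0 k, (Y i - yh i)) := by
      rw [← Finset.sum_sub_distrib, Finset.mul_sum, ← Finset.sum_add_distrib]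
      exact Finset.sum_congr rfl fun i _ => by ring
    have hnn : (x k - ck) * (∑ i ∈ Finset.Ioc 0 k, (Y i - yh i)) ≤ 0 :=
      mul_nonpos_iff.2 (Or.inl ⟨by linarith, hT⟩)
    linarith [hE, hdiff, hnn]
  have hNN : ∑ i ∈ Finset.Ioc 0 n, (x i - cn) * Y i
      = ∑ i ∈ Finset.Ioc 0 n, (x i - cn) * yh i := by
    have hdiff : ∑ i ∈ Finset.Ioc 0 n, (x i - cn) * Y i
          - ∑ i ∈ Finset.Ioc 0 n, (x i - cn) * yh i
        = (∑ i ∈ Finset.Ioc 0 n, (Y i - yh i) * x i)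
          - cn * (∑ i ∈ Finset.Ioc 0 n, (Y i - yh i)) := by
      rw [← Finset.sum_sub_distrib, Finset.mul_sum, ← Finset.sum_sub_distrib]
      exact Finset.sum_congr rfl fun i _ => by ring
    have hz3 : cn * (∑ i ∈ Finset.Ioc 0 n, (Y i - yh i)) = 0 := by rw [hP1, mul_zero]
    linarith [hdiff, hz3, hP2]
  -- positive denominators
  have hSL : 0 < ∑ i ∈ Finset.Ioc 0 k, (x i - ck)^2 := by
    rw [hSLa]
    exact Finset.sum_pos hapos ⟨1, Finset.mem_Ioc.2 ⟨by omega, by omega⟩⟩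
  have hSN : 0 < ∑ i ∈ Finset.Ioc 0 n, (x i - cn)^2 := by
    rw [hSNb]
    exact Finset.sum_pos hbpos ⟨1, Finset.mem_Ioc.2 ⟨by omega, by omega⟩⟩
  rw [div_le_div_iff₀ hSL hSN]
  calc (∑ i ∈ Finset.Ioc 0 k, (x i - ck) * Y i) * ∑ i ∈ Finset.Ioc 0 n, (x i - cn)^2
      ≤ (∑ i ∈ Finset.Ioc 0 k, (x i - ck) * yh i) * ∑ i ∈ Finset.Ioc 0 n, (x i - cn)^2 :=
        mul_le_mul_of_nonneg_right hNL hSN.le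
    _ = (∑ m ∈ Finset.Ioc 0 (k-1), a m * s m) * (∑ l ∈ Finset.Ioc 0 (n-1), b l) := by
        rw [hNLh, hSNb]
    _ ≤ (∑ l ∈ Finset.Ioc 0 (n-1), b l * s l) * (∑ m ∈ Finset.Ioc 0 (k-1), a m) := cheb
    _ = (∑ i ∈ Finset.Ioc 0 n, (x i - cn) * yh i) * ∑ i ∈ Finset.Ioc 0 k, (x i - ck)^2 := by
        rw [hNNh, hSLa]
    _ = (∑ i ∈ Finset.Ioc 0 n, (x i - cn) * Y i) * ∑ i ∈ Finset.Ioc 0 k, (x i - ck)^2 := by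
        rw [hNN]
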